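/- (Dissipativity of quantized consensus.) Let n ∈ ℕ, let w ∈ ℝ^{n×n} be symmetric with nonnegative entries (w_{ij} = w_{ji} ≥ 0), let q : ℝ → ℝ be monotonically non-decreasing, and let x ∈ ℝ^n. Then Σ_{i=1}^n x_i · Σ_{j=1}^n w_{ij}·(q(x_j) − q(x_i)) ≤ 0. -/
import Mathlib


/-- **Dissipativity of quantized consensus.** For a symmetric matrix `w` with nonnegative
entries and a monotonically non-decreasing `q : ℝ → ℝ`,
`Σ_i x_i · Σ_j w_{ij}·(q(x_j) − q(x_i)) ≤ 0`. -/
theorem quantized_consensus_dissipative (n : ℕ) (w : Fin n → Fin n → ℝ)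
    (hw : ∀ i j, w i j = w j i) (hw0 : ∀ i j, 0 ≤ w i j)
    (q : ℝ → ℝ) (hq : Monotone q) (x : Fin n → ℝ) :
    ∑ i, x i * ∑ j, w i j * (q (x j) - q (x i)) ≤ 0 := by
  set S := ∑ i, x i * ∑ j, w i j * (q (x j) - q (x i)) with hS
  have e1 : S = ∑ i, ∑ j, x i * (w i j * (q (x j) - q (x i))) := by
    simp [hS, Finset.mul_sum]
  have e2 : S = ∑ i, ∑ j, x j * (w i j * (q (x i) - q (x j))) := by
    rw [e1, Finset.sum_comm]
    exact Finset.sum_congr rfl fun i _ => Finset.sum_congr rfl fun j _ => by rw [hw]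
  have hsum : S + S = ∑ i, ∑ j, w i j * ((x i - x j) * (q (x j) - q (x i))) := by
    nth_rewrite 1 [e1]; rw [e2]
    rw [← Finset.sum_add_distrib]
    refine Finset.sum_congr rfl fun i _ => ?_
    rw [← Finset.sum_add_distrib]
    exact Finset.sum_congr rfl fun j _ => by ring
  have hle : S + S ≤ 0 := by
    rw [hsum]
    apply Finset.sum_nonpos
    intro i _
    apply Finset.sum_nonpos
    intro j _
    apply mul_nonpos_of_nonneg_of_nonpos (hw0 i j)
    rcases le_total (x i) (x j) with h | h
    · exact mul_nonpos_of_nonpos_of_nonneg (by linarith) (by have := hq h; linarith)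
    · exact mul_nonpos_of_nonneg_of_nonpos (by linarith) (by have := hq h; linarith)
  linarith
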